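/- Let R be a root system with a ℤ/m-grading (R_j)_{j∈ℤ/m}, and let W_0 be the subgroup of the Weyl group generated by the reflections s_α with α ∈ R_0; assume each R_j is stable under W_0. For y, y' ∈ Y with (y,α) ≠ 1 ≠ (y',α) for all α ∈ R_1, write y ≈ y' if ((y,α)−1)((y',α)−1) > 0 for every α ∈ R_1. If y_1, y_1', y_2, y_2' ∈ Y′ satisfy y_1 ≈ y_1' and y_2 ≈ y_2', then Σ_{w∈W_0} v^{τ(y_1, w(y_2))} = Σ_{w∈W_0} v^{τ(y_1', w(y_2'))} in ℤ[v, v^{-1}]. -/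

import Mathlib

open scoped Classical

noncomputable section

/-- A root system: finite-dimensional `ℚ`-vector spaces `Y`, `X` with a perfect
pairing, a finite set of roots `R ⊆ X` with coroots `α ↦ α∨ ∈ Y`, satisfying the
usual axioms (in particular `R = -R` and the reflections preserve `R`). -/
structure RootSystemQ (Y : Type*) (X : Type*) [AddCommGroup Y] [Module ℚ Y]
    [AddCommGroup X] [Module ℚ X] where
  pair : Y →ₗ[ℚ] X →ₗ[ℚ] ℚ
  R : Finset X
  coroot : X → Y
  finY : FiniteDimensional ℚ Y
  finX : FiniteDimensional ℚ X
  nondeg_left : ∀ y : Y, (∀ x : X, pair y x = 0) → y = 0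
  nondeg_right : ∀ x : X, (∀ y : Y, pair y x = 0) → x = 0
  root_ne_zero : ∀ α ∈ R, α ≠ (0 : X)
  neg_mem : ∀ α ∈ R, -α ∈ R
  coroot_neg : ∀ α ∈ R, coroot (-α) = -coroot α
  pair_coroot_self : ∀ α ∈ R, pair (coroot α) α = 2
  reflect_mem : ∀ α ∈ R, ∀ β ∈ R, β - pair (coroot α) β • α ∈ R

/-- A `ℤ/m`-grading of a root system, encoded by a grading function
`grade : X → ZMod m`; the graded piece `R_j` is `{α ∈ R | grade α = j}`.
The axioms say: if `α + α' ∈ R` then `α + α'` has grade `j + j'`, and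
`-α` has grade `-j` (i.e. `α + α' = 0` forces `j + j' = 0`). -/
structure ZModGrading {Y X : Type*} [AddCommGroup Y] [Module ℚ Y]
    [AddCommGroup X] [Module ℚ X] (m : ℕ) (P : RootSystemQ Y X) where
  grade : X → ZMod m
  grade_add : ∀ α ∈ P.R, ∀ β ∈ P.R, α + β ∈ P.R → grade (α + β) = grade α + grade β
  grade_neg : ∀ α ∈ P.R, grade (-α) = -grade α

variable {Y X : Type*} [AddCommGroup Y] [Module ℚ Y] [AddCommGroup X] [Module ℚ X]

/-- The subgroup `W₀` of the Weyl group generated by the reflections attached to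
roots `α ∈ R₀`, recorded together with both its action on `Y` (first component,
the contragredient action) and its action on `X` (second component). -/
def W0P (m : ℕ) (P : RootSystemQ Y X) (G : ZModGrading m P) :
    Subgroup ((Y ≃ₗ[ℚ] Y) × (X ≃ₗ[ℚ] X)) :=
  Subgroup.closure {p | ∃ α ∈ P.R, G.grade α = 0 ∧
    (∀ y : Y, p.1 y = y - P.pair y α • P.coroot α) ∧
    (∀ x : X, p.2 x = x - P.pair (P.coroot α) x • α)}

/-- `τ(y,y') = #{α ∈ R₁ : ((y,α)−1)((y',α)−1) < 0} − #{α ∈ R₀ : (y,α)(y',α) < 0}`. -/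
def tauP (m : ℕ) (P : RootSystemQ Y X) (G : ZModGrading m P) (y y' : Y) : ℤ :=
  ((P.R.filter fun α => G.grade α = 1 ∧
      (P.pair y α - 1) * (P.pair y' α - 1) < 0).card : ℤ) -
  ((P.R.filter fun α => G.grade α = 0 ∧
      P.pair y α * P.pair y' α < 0).card : ℤ)

/-- Membership in `Y′ = Y − ∪_{j, α ∈ R_j} {y : (y,α) ∈ ℤ, (y,α) ≡ j mod m}`. -/
def memYprime (m : ℕ) (P : RootSystemQ Y X) (G : ZModGrading m P) (y : Y) : Prop :=
  ∀ α ∈ P.R, ∀ N : ℤ, (N : ZMod m) = G.grade α → P.pair y α ≠ (N : ℚ)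

namespace St16Aux


lemma aux_sign {a b : ℚ} (h : 0 < a * b) : (0 < a ∧ 0 < b) ∨ (a < 0 ∧ b < 0) := by
  rcases lt_trichotomy a 0 with h1 | h1 | h1
  · right; refine ⟨h1, ?_⟩; nlinarith
  · subst h1; simp at h
  · left; refine ⟨h1, ?_⟩; nlinarith

lemma mulpos_trans {a b c : ℚ} (h1 : 0 < a * b) (h2 : 0 < a * c) : 0 < b * c := by
  rcases aux_sign h1 with ⟨ha, hb⟩ | ⟨ha, hb⟩ <;> rcases aux_sign h2 with ⟨ha', hc⟩ | ⟨ha', hc⟩ <;>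
    first | (exact mul_pos hb hc) | (exact mul_pos_of_neg_of_neg hb hc) | linarith

lemma sign_mul_iff {a b c : ℚ} (h : 0 < a * b) : a * c < 0 ↔ b * c < 0 := by
  rcases aux_sign h with ⟨ha, hb⟩ | ⟨ha, hb⟩
  · constructor <;> intro h' <;> nlinarith
  · constructor <;> intro h' <;> nlinarith

/-- zero of an affine function with endpoints of opposite signs -/
lemma affine_root_iff {a b t : ℚ} (hab : a * b < 0) :
    (a + t * (b - a) = 0 ↔ t = a / (a - b)) := by
  have hne : a - b ≠ 0 := by
    intro h
    have : a = b := by linarith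
    subst this
    nlinarith
  rw [eq_div_iff hne]
  constructor <;> intro h <;> linarith [h]

lemma affine_root_pos {a b : ℚ} (hab : a * b < 0) :
    0 < a / (a - b) ∧ a / (a - b) < 1 := by
  rcases lt_trichotomy a 0 with ha | ha | ha
  · have hb : 0 < b := by nlinarith
    have h1 : a - b < 0 := by linarith
    constructor
    · exact div_pos_of_neg_of_neg ha h1
    · rw [div_lt_one_of_neg h1]; linarith
  · subst ha; simp at hab
  · have hb : b < 0 := by nlinarith
    have h1 : 0 < a - b := by linarith
    constructor
    · exact div_pos ha h1
    · rw [div_lt_one h1]; linarith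

/-- strict sign preservation before the root -/
lemma affine_before_root {a b t : ℚ} (hab : a * b < 0) (ht0 : 0 ≤ t) (ht : t < a / (a - b)) :
    0 < a * (a + t * (b - a)) := by
  rcases lt_trichotomy a 0 with ha | ha | ha
  · have hb : 0 < b := by nlinarith
    have h1 : a - b < 0 := by linarith
    have h2 : a < t * (a - b) := by
      have h3 := mul_lt_mul_of_neg_right ht h1
      have h4 : a / (a - b) * (a - b) = a := div_mul_cancel₀ a (ne_of_lt h1)
      linarith [h3, h4.ge, h4.le]
    nlinarith
  · subst ha; simp at hab
  · have hb : b < 0 := by nlinarith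
    have h1 : 0 < a - b := by linarith
    rw [lt_div_iff₀ h1] at ht
    nlinarith

/-- sign preservation when endpoints have the same sign, `t ∈ [0,1]` -/
lemma affine_same_sign {a b t : ℚ} (hab : 0 < a * b) (ht0 : 0 ≤ t) (ht1 : t ≤ 1) :
    0 < a * (a + t * (b - a)) := by
  have key : a * (a + t * (b - a)) = (1 - t) * (a * a) + t * (a * b) := by ring
  have haa : 0 < a * a := by
    rcases aux_sign hab with ⟨h, _⟩ | ⟨h, _⟩ <;> nlinarith
  rw [key]
  rcases lt_or_eq_of_le ht1 with h | h
  · have h1 : 0 < (1 - t) * (a * a) := mul_pos (by linarith) haa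
    have h2 : 0 ≤ t * (a * b) := mul_nonneg ht0 hab.le
    linarith
  · rw [h]; norm_num; linarith

lemma exists_pos_avoiding (l₁ l₂ : List (ℚ × ℚ))
    (h₁ : ∀ p ∈ l₁, 0 < p.1 ∨ (p.1 = 0 ∧ 0 < p.2)) (h₂ : ∀ p ∈ l₂, p.2 ≠ 0) :
    ∃ t : ℚ, 0 < t ∧ (∀ p ∈ l₁, 0 < p.1 + t * p.2) ∧ (∀ p ∈ l₂, p.1 + t * p.2 ≠ 0) := by
  -- first get a uniform bound T for the inequalities
  have part1 : ∃ T : ℚ, 0 < T ∧ ∀ t : ℚ, 0 < t → t ≤ T → ∀ p ∈ l₁, 0 < p.1 + t * p.2 := by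
    induction l₁ with
    | nil => exact ⟨1, one_pos, fun t ht _ p hp => absurd hp List.not_mem_nil⟩
    | cons q l ih =>
      obtain ⟨T, hT, hTall⟩ := ih (fun p hp => h₁ p (List.mem_cons_of_mem q hp))
      rcases h₁ q List.mem_cons_self with hq | ⟨hq0, hq2⟩
      · refine ⟨min T (q.1 / (|q.2| + 1)), lt_min hT (div_pos hq (by positivity)), ?_⟩
        intro t ht htle p hp
        rcases List.mem_cons.mp hp with rfl | hp
        · have h1 : t ≤ p.1 / (|p.2| + 1) := le_trans htle (min_le_right _ _)
          have h2 : t * (|p.2| + 1) ≤ p.1 := (le_div_iff₀ (by positivity)).mp h1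
          nlinarith [abs_nonneg p.2, neg_abs_le (t * p.2), le_abs_self (t * p.2),
            mul_le_mul_of_nonneg_left (neg_abs_le p.2) ht.le,
            mul_le_mul_of_nonneg_left (le_abs_self p.2) ht.le]
        · exact hTall t ht (le_trans htle (min_le_left _ _)) p hp
      · refine ⟨T, hT, ?_⟩
        intro t ht htle p hp
        rcases List.mem_cons.mp hp with rfl | hp
        · rw [hq0, zero_add]; exact mul_pos ht hq2
        · exact hTall t ht htle p hp
  obtain ⟨T, hT, hTall⟩ := part1
  -- bad values for the ≠ 0 conditions
  classical
  let bad : List ℚ := l₂.map fun p => -p.1 / p.2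
  have : ∃ n : ℕ, T / (n + 1) ∉ bad.toFinset := by
    by_contra hcon
    push_neg at hcon
    have hinj : Function.Injective (fun n : ℕ => T / (n + 1)) := by
      intro a b hab
      simp only at hab
      have ha : ((a : ℚ) + 1) ≠ 0 := by positivity
      have hb : ((b : ℚ) + 1) ≠ 0 := by positivity
      rw [div_eq_div_iff ha hb] at hab
      have : (a : ℚ) = b := by
        have := mul_left_cancel₀ (ne_of_gt hT) hab
        linarith
      exact_mod_cast this
    have := Set.infinite_of_injective_forall_mem hinj (fun n => hcon n)
    exact this (bad.toFinset : Finset ℚ).finite_toSet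
  obtain ⟨n, hn⟩ := this
  refine ⟨T / (n + 1), by positivity, ?_, ?_⟩
  · intro p hp
    refine hTall _ (by positivity) ?_ p hp
    rw [div_le_iff₀ (by positivity)]
    nlinarith [hT]
  · intro p hp heq
    apply hn
    simp only [bad, List.mem_toFinset, List.mem_map]
    refine ⟨p, hp, ?_⟩
    have hp2 := h₂ p hp
    rw [div_eq_iff hp2]
    linarith [heq]


end St16Aux

namespace St16Aux

lemma aux_sign_neg {a b : ℚ} (h : a * b < 0) : (0 < a ∧ b < 0) ∨ (a < 0 ∧ 0 < b) := by
  rcases lt_trichotomy a 0 with h1 | h1 | h1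
  · right; refine ⟨h1, ?_⟩; nlinarith
  · subst h1; simp at h
  · left; refine ⟨h1, ?_⟩; nlinarith

variable {Y X : Type*} [AddCommGroup Y] [Module ℚ Y] [AddCommGroup X] [Module ℚ X]

section RS

variable (m : ℕ) (P : RootSystemQ Y X) (G : ZModGrading m P)

lemma tau_symm (y z : Y) : tauP m P G y z = tauP m P G z y := by
  unfold tauP
  have e1 : (P.R.filter fun α => G.grade α = 1 ∧
      (P.pair y α - 1) * (P.pair z α - 1) < 0) = (P.R.filter fun α => G.grade α = 1 ∧
      (P.pair z α - 1) * (P.pair y α - 1) < 0) := by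
    apply Finset.filter_congr; intro α _; rw [mul_comm]
  have e2 : (P.R.filter fun α => G.grade α = 0 ∧
      P.pair y α * P.pair z α < 0) = (P.R.filter fun α => G.grade α = 0 ∧
      P.pair z α * P.pair y α < 0) := by
    apply Finset.filter_congr; intro α _; rw [mul_comm]
  rw [e1, e2]

lemma tau_congr_left {y y' : Y}
    (h0 : ∀ β ∈ P.R, G.grade β = 0 → 0 < P.pair y β * P.pair y' β)
    (h1 : ∀ γ ∈ P.R, G.grade γ = 1 → 0 < (P.pair y γ - 1) * (P.pair y' γ - 1)) (z : Y) :
    tauP m P G y z = tauP m P G y' z := by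
  unfold tauP
  have e1 : (P.R.filter fun α => G.grade α = 1 ∧
      (P.pair y α - 1) * (P.pair z α - 1) < 0) = (P.R.filter fun α => G.grade α = 1 ∧
      (P.pair y' α - 1) * (P.pair z α - 1) < 0) := by
    apply Finset.filter_congr
    intro γ hγ
    constructor
    · rintro ⟨hg, hlt⟩; exact ⟨hg, (sign_mul_iff (h1 γ hγ hg)).mp hlt⟩
    · rintro ⟨hg, hlt⟩; exact ⟨hg, (sign_mul_iff (h1 γ hγ hg)).mpr hlt⟩
  have e2 : (P.R.filter fun α => G.grade α = 0 ∧
      P.pair y α * P.pair z α < 0) = (P.R.filter fun α => G.grade α = 0 ∧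
      P.pair y' α * P.pair z α < 0) := by
    apply Finset.filter_congr
    intro β hβ
    constructor
    · rintro ⟨hg, hlt⟩; exact ⟨hg, (sign_mul_iff (h0 β hβ hg)).mp hlt⟩
    · rintro ⟨hg, hlt⟩; exact ⟨hg, (sign_mul_iff (h0 β hβ hg)).mpr hlt⟩
  rw [e1, e2]

lemma pair_invariance {p : (Y ≃ₗ[ℚ] Y) × (X ≃ₗ[ℚ] X)} (hp : p ∈ W0P m P G) :
    ∀ (y : Y) (x : X), P.pair (p.1 y) (p.2 x) = P.pair y x := by
  induction hp using Subgroup.closure_induction with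
  | mem q hq =>
    obtain ⟨α, hα, -, hY, hX⟩ := hq
    intro y x
    rw [hY, hX]
    have h2 := P.pair_coroot_self α hα
    simp only [map_sub, map_smul, LinearMap.sub_apply, LinearMap.smul_apply, smul_eq_mul]
    rw [h2]; ring
  | one => intro y x; simp
  | mul a b ha hb hA hB =>
    intro y x
    have e1 : (a * b).1 y = a.1 (b.1 y) := rfl
    have e2 : (a * b).2 x = a.2 (b.2 x) := rfl
    rw [e1, e2, hA, hB]
  | inv a ha hA =>
    intro y x
    have e1 : a.1 (a⁻¹.1 y) = y := a.1.apply_symm_apply y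
    have e2 : a.2 (a⁻¹.2 x) = x := a.2.apply_symm_apply x
    calc P.pair (a⁻¹.1 y) (a⁻¹.2 x)
        = P.pair (a.1 (a⁻¹.1 y)) (a.2 (a⁻¹.2 x)) := (hA _ _).symm
      _ = P.pair y x := by rw [e1, e2]

lemma tau_winv {p : (Y ≃ₗ[ℚ] Y) × (X ≃ₗ[ℚ] X)} (hp : p ∈ W0P m P G)
    (hstab : ∀ q ∈ W0P m P G, ∀ α ∈ P.R, q.2 α ∈ P.R ∧ G.grade (q.2 α) = G.grade α)
    (y z : Y) : tauP m P G (p.1 y) (p.1 z) = tauP m P G y z := by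
  have hinv := hstab p⁻¹ (inv_mem hp)
  have hfwd := hstab p hp
  have hsymm_apply : ∀ x : X, p⁻¹.2 x = p.2.symm x := fun _ => rfl
  have key : ∀ (c : ℚ) (j : ZMod m),
      (P.R.filter fun α => G.grade α = j ∧
        (P.pair y α - c) * (P.pair z α - c) < 0).card =
      (P.R.filter fun α => G.grade α = j ∧
        (P.pair (p.1 y) α - c) * (P.pair (p.1 z) α - c) < 0).card := by
    intro c j
    apply Finset.card_nbij (i := fun α => p.2 α)
    · intro α hα
      simp only [Finset.mem_coe, Finset.coe_filter, Set.mem_setOf_eq, Finset.mem_filter] at hα ⊢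
      obtain ⟨hR, hg, hlt⟩ := hα
      obtain ⟨hR', hg'⟩ := hfwd α hR
      refine ⟨hR', by rw [hg', hg], ?_⟩
      rw [pair_invariance m P G hp y α, pair_invariance m P G hp z α]
      exact hlt
    · intro a _ b _ hab
      exact p.2.injective hab
    · intro β hβ
      simp only [Finset.coe_filter, Set.mem_setOf_eq] at hβ
      obtain ⟨hR, hg, hlt⟩ := hβ
      refine ⟨p.2.symm β, ?_, p.2.apply_symm_apply β⟩
      obtain ⟨hR', hg'⟩ := hinv β hR
      rw [hsymm_apply] at hR' hg'
      simp only [Finset.coe_filter, Set.mem_setOf_eq]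
      refine ⟨hR', by rw [hg', hg], ?_⟩
      have h1 : P.pair (p.1 y) (p.2 (p.2.symm β)) = P.pair y (p.2.symm β) :=
        pair_invariance m P G hp y (p.2.symm β)
      have h2 : P.pair (p.1 z) (p.2 (p.2.symm β)) = P.pair z (p.2.symm β) :=
        pair_invariance m P G hp z (p.2.symm β)
      rw [p.2.apply_symm_apply β] at h1 h2
      rw [h1, h2] at hlt
      exact hlt
  unfold tauP
  have k1 := key 1 1
  have k0 := key 0 0
  simp only [sub_zero] at k0
  rw [k1, k0]

lemma refl_exists {α : X} (hα : α ∈ P.R) (h0 : G.grade α = 0) :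
    ∃ u ∈ W0P m P G, (∀ y : Y, u.1 y = y - P.pair y α • P.coroot α) ∧
      (∀ x : X, u.2 x = x - P.pair (P.coroot α) x • α) := by
  have h2 := P.pair_coroot_self α hα
  set fY : Y →ₗ[ℚ] Y := LinearMap.id - (P.pair.flip α).smulRight (P.coroot α) with hfY
  set fX : X →ₗ[ℚ] X := LinearMap.id - (P.pair (P.coroot α)).smulRight α with hfX
  have hfYa : ∀ y : Y, fY y = y - P.pair y α • P.coroot α := by
    intro y
    simp [hfY, LinearMap.sub_apply, LinearMap.smulRight_apply, LinearMap.flip_apply]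
  have hfXa : ∀ x : X, fX x = x - P.pair (P.coroot α) x • α := by
    intro x
    simp [hfX, LinearMap.sub_apply, LinearMap.smulRight_apply]
  have hYinv : Function.Involutive fY := by
    intro y
    rw [hfYa, hfYa]
    have e : P.pair (y - P.pair y α • P.coroot α) α
        = P.pair y α - P.pair y α * 2 := by
      simp only [map_sub, map_smul, LinearMap.sub_apply, LinearMap.smul_apply, smul_eq_mul, h2]
    rw [e]
    module
  have hXinv : Function.Involutive fX := by
    intro x
    rw [hfXa, hfXa]
    have e : P.pair (P.coroot α) (x - P.pair (P.coroot α) x • α)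
        = P.pair (P.coroot α) x - P.pair (P.coroot α) x * 2 := by
      simp only [map_sub, map_smul, smul_eq_mul, h2]
    rw [e]
    module
  refine ⟨(LinearEquiv.ofInvolutive fY hYinv, LinearEquiv.ofInvolutive fX hXinv), ?_, ?_, ?_⟩
  · apply Subgroup.subset_closure
    refine ⟨α, hα, h0, ?_, ?_⟩
    · intro y
      show fY y = _
      exact hfYa y
    · intro x
      show fX x = _
      exact hfXa x
  · intro y; exact hfYa y
  · intro x; exact hfXa x

lemma exists_forall_ne_zero (S : Finset (Y →ₗ[ℚ] ℚ)) (hS : ∀ f ∈ S, f ≠ 0) :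
    ∃ d : Y, ∀ f ∈ S, f d ≠ 0 := by
  classical
  induction S using Finset.induction_on with
  | empty => exact ⟨0, fun f hf => absurd hf (Finset.notMem_empty f)⟩
  | @insert f S hfS ih =>
    obtain ⟨d, hd⟩ := ih (fun g hg => hS g (Finset.mem_insert_of_mem hg))
    have hf : f ≠ 0 := hS f (Finset.mem_insert_self f S)
    obtain ⟨d', hd'⟩ : ∃ d', f d' ≠ 0 := by
      by_contra hcon
      push_neg at hcon
      exact hf (LinearMap.ext fun v => by rw [hcon v]; rfl)
    set B : Finset ℚ := (insert f S).image (fun g => -(g d) / g d') with hB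
    obtain ⟨t, ht⟩ := Infinite.exists_notMem_finset B
    refine ⟨d + t • d', ?_⟩
    intro g hg
    have hval : g (d + t • d') = g d + t * g d' := by
      rw [map_add, map_smul, smul_eq_mul]
    rw [hval]
    intro heq
    rcases Finset.mem_insert.mp hg with rfl | hgS
    · apply ht
      rw [hB]
      apply Finset.mem_image.mpr
      refine ⟨g, Finset.mem_insert_self g S, ?_⟩
      rw [div_eq_iff hd']
      linarith
    · by_cases hgz : g d' = 0
      · rw [hgz, mul_zero, add_zero] at heq
        exact hd g hgS heq
      · apply ht
        rw [hB]
        apply Finset.mem_image.mpr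
        refine ⟨g, Finset.mem_insert_of_mem hgS, ?_⟩
        rw [div_eq_iff hgz]
        linarith

end RS

section FS

variable (m : ℕ) (P : RootSystemQ Y X) (G : ZModGrading m P)
variable (Wfin : Finset ((Y ≃ₗ[ℚ] Y) × (X ≃ₗ[ℚ] X)))

/-- the sum `Σ_{p ∈ Wfin} v^{τ(y, p(b))}` -/
def FS2 (y b : Y) : LaurentPolynomial ℤ :=
  ∑ p ∈ Wfin, LaurentPolynomial.T (tauP m P G y (p.1 b))

variable (hWfin : ∀ p, p ∈ Wfin ↔ p ∈ W0P m P G)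
variable (hstab : ∀ q ∈ W0P m P G, ∀ α ∈ P.R, q.2 α ∈ P.R ∧ G.grade (q.2 α) = G.grade α)

include hWfin hstab

lemma FS2_winv {u : (Y ≃ₗ[ℚ] Y) × (X ≃ₗ[ℚ] X)} (hu : u ∈ W0P m P G) (y b : Y) :
    FS2 m P G Wfin (u.1 y) b = FS2 m P G Wfin y b := by
  unfold FS2
  refine Finset.sum_nbij' (i := fun p => u⁻¹ * p) (j := fun p => u * p) ?_ ?_ ?_ ?_ ?_
  · intro p hp
    exact (hWfin _).mpr (mul_mem (inv_mem hu) ((hWfin p).mp hp))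
  · intro p hp
    exact (hWfin _).mpr (mul_mem hu ((hWfin p).mp hp))
  · intro p _; group
  · intro p _; group
  · intro p hp
    congr 1
    have e1 : u.1 ((u⁻¹ * p).1 b) = (u * (u⁻¹ * p)).1 b := rfl
    have e2 : u * (u⁻¹ * p) = p := by group
    have e3 : u.1 ((u⁻¹ * p).1 b) = p.1 b := by rw [e1, e2]
    calc tauP m P G (u.1 y) (p.1 b)
        = tauP m P G (u.1 y) (u.1 ((u⁻¹ * p).1 b)) := by rw [e3]
      _ = tauP m P G y ((u⁻¹ * p).1 b) := tau_winv m P G hu hstab _ _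

lemma FS2_swap (a b : Y) : FS2 m P G Wfin a b = FS2 m P G Wfin b a := by
  unfold FS2
  refine Finset.sum_nbij' (i := fun p => p⁻¹) (j := fun p => p⁻¹) ?_ ?_ ?_ ?_ ?_
  · intro p hp; exact (hWfin _).mpr (inv_mem ((hWfin p).mp hp))
  · intro p hp; exact (hWfin _).mpr (inv_mem ((hWfin p).mp hp))
  · intro p _; group
  · intro p _; group
  · intro p hp
    congr 1
    have hpW := (hWfin p).mp hp
    have e1 : p.1 (p⁻¹.1 a) = a := p.1.apply_symm_apply a
    calc tauP m P G a (p.1 b)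
        = tauP m P G (p.1 (p⁻¹.1 a)) (p.1 b) := by rw [e1]
      _ = tauP m P G (p⁻¹.1 a) b := tau_winv m P G hpW hstab _ _
      _ = tauP m P G b (p⁻¹.1 a) := tau_symm m P G _ _

omit hWfin hstab in
lemma FS2_cell {y y' : Y}
    (h0 : ∀ β ∈ P.R, G.grade β = 0 → 0 < P.pair y β * P.pair y' β)
    (h1 : ∀ γ ∈ P.R, G.grade γ = 1 → 0 < (P.pair y γ - 1) * (P.pair y' γ - 1)) (b : Y) :
    FS2 m P G Wfin y b = FS2 m P G Wfin y' b := by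
  unfold FS2
  refine Finset.sum_congr rfl fun p _ => ?_
  rw [tau_congr_left m P G h0 h1]

omit hWfin hstab in
lemma FS2_D_empty (y y' y₂ : Y)
    (gy0 : ∀ β ∈ P.R, G.grade β = 0 → P.pair y β ≠ 0)
    (gy'0 : ∀ β ∈ P.R, G.grade β = 0 → P.pair y' β ≠ 0)
    (he : ∀ γ ∈ P.R, G.grade γ = 1 → 0 < (P.pair y γ - 1) * (P.pair y' γ - 1))
    (hD : P.R.filter (fun β => G.grade β = 0 ∧ P.pair y β * P.pair y' β < 0) = ∅) :
    FS2 m P G Wfin y y₂ = FS2 m P G Wfin y' y₂ := by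
  apply FS2_cell
  · intro β hβ hg
    have hne : P.pair y β * P.pair y' β ≠ 0 :=
      mul_ne_zero (gy0 β hβ hg) (gy'0 β hβ hg)
    have hnotin : ¬ (G.grade β = 0 ∧ P.pair y β * P.pair y' β < 0) := by
      intro hcon
      have : β ∈ P.R.filter (fun β => G.grade β = 0 ∧ P.pair y β * P.pair y' β < 0) :=
        Finset.mem_filter.mpr ⟨hβ, hcon⟩
      rw [hD] at this
      exact absurd this (Finset.notMem_empty β)
    have hnl : ¬ (P.pair y β * P.pair y' β < 0) := fun h => hnotin ⟨hg, h⟩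
    exact lt_of_le_of_ne (not_lt.mp hnl) (Ne.symm hne)
  · exact he

lemma FS2_main (y₂ : Y) : ∀ (n : ℕ) (y y' : Y),
    (∀ β ∈ P.R, G.grade β = 0 → P.pair y β ≠ 0) →
    (∀ γ ∈ P.R, G.grade γ = 1 → P.pair y γ ≠ 1) →
    (∀ β ∈ P.R, G.grade β = 0 → P.pair y' β ≠ 0) →
    (∀ γ ∈ P.R, G.grade γ = 1 → P.pair y' γ ≠ 1) →
    (∀ γ ∈ P.R, G.grade γ = 1 → 0 < (P.pair y γ - 1) * (P.pair y' γ - 1)) →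
    (P.R.filter fun β => G.grade β = 0 ∧ P.pair y β * P.pair y' β < 0).card ≤ n →
    FS2 m P G Wfin y y₂ = FS2 m P G Wfin y' y₂ := by
  intro n
  induction n with
  | zero =>
    intro y y' gy0 gy1 gy'0 gy'1 he hc
    exact FS2_D_empty m P G Wfin y y' y₂ gy0 gy'0 he
      (Finset.card_eq_zero.mp (Nat.le_zero.mp hc))
  | succ n ih =>
    intro y y' gy0 gy1 gy'0 gy'1 he hc
    by_cases hD : (P.R.filter fun β => G.grade β = 0 ∧ P.pair y β * P.pair y' β < 0) = ∅
    · exact FS2_D_empty m P G Wfin y y' y₂ gy0 gy'0 he hD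
    classical
    -- the linear functionals detecting non-parallel coincidences
    set ℓ : X → (Y →ₗ[ℚ] ℚ) := fun β => P.pair.flip β with hℓ
    have hℓa : ∀ (β : X) (v : Y), ℓ β v = P.pair v β := fun β v => rfl
    set L : X × X → (Y →ₗ[ℚ] ℚ) :=
      fun q => P.pair y' q.2 • ℓ q.1 - P.pair y' q.1 • ℓ q.2 with hLdef
    have hLa : ∀ (q : X × X) (v : Y),
        L q v = P.pair y' q.2 * P.pair v q.1 - P.pair y' q.1 * P.pair v q.2 := by
      intro q v
      simp [hLdef, LinearMap.sub_apply, LinearMap.smul_apply, smul_eq_mul, hℓa]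
    set pairsSet : Finset (X × X) := (P.R ×ˢ P.R).filter (fun q => L q ≠ 0) with hPS
    -- a direction in which all those functionals are nonzero
    obtain ⟨d, hd⟩ := exists_forall_ne_zero (pairsSet.image L) (by
      intro f hf
      obtain ⟨q, hq, rfl⟩ := Finset.mem_image.mp hf
      exact (Finset.mem_filter.mp hq).2)
    have hd' : ∀ q ∈ pairsSet, L q d ≠ 0 := fun q hq => hd (L q) (Finset.mem_image_of_mem L hq)
    -- perturb y to yt := y + t₀ • d, generically
    set R0 : Finset X := P.R.filter (fun β => G.grade β = 0) with hR0
    set R1 : Finset X := P.R.filter (fun γ => G.grade γ = 1) with hR1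
    set l₁ : List (ℚ × ℚ) :=
      (R0.toList.map fun β => (P.pair y β * P.pair y β, P.pair y β * P.pair d β))
      ++ (R1.toList.map fun γ =>
          ((P.pair y γ - 1) * (P.pair y γ - 1), (P.pair y γ - 1) * P.pair d γ)) with hl₁
    set l₂ : List (ℚ × ℚ) := pairsSet.toList.map (fun q => (L q y, L q d)) with hl₂
    obtain ⟨t₀, ht₀, hA1, hA2⟩ := exists_pos_avoiding l₁ l₂
      (by
        intro p hp
        rw [hl₁] at hp
        rcases List.mem_append.mp hp with hp | hp
        · obtain ⟨β, hβ, rfl⟩ := List.mem_map.mp hp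
          rw [Finset.mem_toList, hR0, Finset.mem_filter] at hβ
          left
          exact mul_self_pos.mpr (gy0 β hβ.1 hβ.2)
        · obtain ⟨γ, hγ, rfl⟩ := List.mem_map.mp hp
          rw [Finset.mem_toList, hR1, Finset.mem_filter] at hγ
          left
          exact mul_self_pos.mpr (sub_ne_zero.mpr (gy1 γ hγ.1 hγ.2)))
      (by
        intro p hp
        rw [hl₂] at hp
        obtain ⟨q, hq, rfl⟩ := List.mem_map.mp hp
        exact hd' q (Finset.mem_toList.mp hq))
    set yt : Y := y + t₀ • d with hyt
    have hpert : ∀ β : X, P.pair yt β = P.pair y β + t₀ * P.pair d β := by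
      intro β
      rw [hyt, map_add, map_smul]
      simp [LinearMap.add_apply, LinearMap.smul_apply, smul_eq_mul]
    -- yt is in the same cell as y
    have cell0 : ∀ β ∈ P.R, G.grade β = 0 → 0 < P.pair y β * P.pair yt β := by
      intro β hβ hg
      have hmem : (P.pair y β * P.pair y β, P.pair y β * P.pair d β) ∈ l₁ := by
        rw [hl₁]
        apply List.mem_append_left
        exact List.mem_map.mpr ⟨β, Finset.mem_toList.mpr
          (by rw [hR0]; exact Finset.mem_filter.mpr ⟨hβ, hg⟩), rfl⟩
      have h := hA1 _ hmem
      have e : P.pair y β * P.pair yt β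
          = P.pair y β * P.pair y β + t₀ * (P.pair y β * P.pair d β) := by
        rw [hpert]; ring
      rw [e]; exact h
    have cell1 : ∀ γ ∈ P.R, G.grade γ = 1 →
        0 < (P.pair y γ - 1) * (P.pair yt γ - 1) := by
      intro γ hγ hg
      have hmem : ((P.pair y γ - 1) * (P.pair y γ - 1), (P.pair y γ - 1) * P.pair d γ) ∈ l₁ := by
        rw [hl₁]
        apply List.mem_append_right
        exact List.mem_map.mpr ⟨γ, Finset.mem_toList.mpr
          (by rw [hR1]; exact Finset.mem_filter.mpr ⟨hγ, hg⟩), rfl⟩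
      have h := hA1 _ hmem
      have e : (P.pair y γ - 1) * (P.pair yt γ - 1)
          = (P.pair y γ - 1) * (P.pair y γ - 1) + t₀ * ((P.pair y γ - 1) * P.pair d γ) := by
        rw [hpert]; ring
      rw [e]; exact h
    have hLyt : ∀ q ∈ pairsSet, L q yt ≠ 0 := by
      intro q hq
      have hmem : (L q y, L q d) ∈ l₂ := by
        rw [hl₂]
        exact List.mem_map.mpr ⟨q, Finset.mem_toList.mpr hq, rfl⟩
      have h := hA2 _ hmem
      have e : L q yt = L q y + t₀ * L q d := by
        rw [hyt, map_add, map_smul, smul_eq_mul]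
      rw [e]; exact h
    -- genericity of yt
    have gyt0 : ∀ β ∈ P.R, G.grade β = 0 → P.pair yt β ≠ 0 := by
      intro β hβ hg h
      have := cell0 β hβ hg
      rw [h, mul_zero] at this
      exact lt_irrefl 0 this
    have gyt1 : ∀ γ ∈ P.R, G.grade γ = 1 → P.pair yt γ ≠ 1 := by
      intro γ hγ hg h
      have := cell1 γ hγ hg
      rw [h, sub_self, mul_zero] at this
      exact lt_irrefl 0 this
    have heyt : ∀ γ ∈ P.R, G.grade γ = 1 →
        0 < (P.pair yt γ - 1) * (P.pair y' γ - 1) :=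
      fun γ hγ hg => mulpos_trans (cell1 γ hγ hg) (he γ hγ hg)
    -- the set of separating hyperplanes between yt and y'
    set D' : Finset X :=
      P.R.filter (fun β => G.grade β = 0 ∧ P.pair yt β * P.pair y' β < 0) with hD'def
    have hDeq : D' = P.R.filter (fun β => G.grade β = 0 ∧ P.pair y β * P.pair y' β < 0) := by
      rw [hD'def]
      apply Finset.filter_congr
      intro β hβ
      constructor
      · rintro ⟨hg, hlt⟩
        exact ⟨hg, (sign_mul_iff (mul_comm (P.pair y β) (P.pair yt β) ▸ cell0 β hβ hg)).mp hlt⟩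
      · rintro ⟨hg, hlt⟩
        exact ⟨hg, (sign_mul_iff (mul_comm (P.pair y β) (P.pair yt β) ▸ cell0 β hβ hg)).mpr hlt⟩
    have hD'card : D'.card ≤ n + 1 := by rw [hDeq]; exact hc
    have hD'ne : D'.Nonempty := by
      rw [hDeq]
      exact Finset.nonempty_of_ne_empty hD
    -- crossing times
    set tt : X → ℚ := fun β => P.pair yt β / (P.pair yt β - P.pair y' β) with htt
    have hTne : (D'.image tt).Nonempty := hD'ne.image tt
    set t₁ : ℚ := (D'.image tt).min' hTne with ht₁def
    obtain ⟨α, hαD', hαt⟩ : ∃ α ∈ D', tt α = t₁ :=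
      Finset.mem_image.mp ((D'.image tt).min'_mem hTne)
    have hmin : ∀ β ∈ D', t₁ ≤ tt β :=
      fun β hβ => (D'.image tt).min'_le _ (Finset.mem_image_of_mem tt hβ)
    have hαR : α ∈ P.R := (Finset.mem_filter.mp hαD').1
    have hαg : G.grade α = 0 := (Finset.mem_filter.mp hαD').2.1
    have hαlt : P.pair yt α * P.pair y' α < 0 := (Finset.mem_filter.mp hαD').2.2
    have hroot := affine_root_pos hαlt
    have ht₁pos : 0 < t₁ := by rw [← hαt]; exact hroot.1
    have ht₁lt1 : t₁ < 1 := by rw [← hαt]; exact hroot.2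
    -- the point on the wall
    set y₀ : Y := yt + t₁ • (y' - yt) with hy₀def
    have hy₀a : ∀ β : X, P.pair y₀ β = P.pair yt β + t₁ * (P.pair y' β - P.pair yt β) := by
      intro β
      rw [hy₀def, map_add, map_smul]
      simp [LinearMap.add_apply, LinearMap.smul_apply, smul_eq_mul, map_sub,
        LinearMap.sub_apply]
    have hy₀α : P.pair y₀ α = 0 := by
      rw [hy₀a]
      exact (affine_root_iff hαlt).mpr (by rw [← hαt])
    -- signs at y₀ away from the wall
    have hsign_nonD : ∀ β ∈ P.R, G.grade β = 0 → ¬(P.pair yt β * P.pair y' β < 0) →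
        0 < P.pair yt β * P.pair y₀ β := by
      intro β hβ hg hnl
      have hne : P.pair yt β * P.pair y' β ≠ 0 :=
        mul_ne_zero (gyt0 β hβ hg) (gy'0 β hβ hg)
      have hpos : 0 < P.pair yt β * P.pair y' β := lt_of_le_of_ne (not_lt.mp hnl) (Ne.symm hne)
      rw [hy₀a]
      exact affine_same_sign hpos ht₁pos.le ht₁lt1.le
    have hsign_R1 : ∀ γ ∈ P.R, G.grade γ = 1 →
        0 < (P.pair yt γ - 1) * (P.pair y₀ γ - 1) := by
      intro γ hγ hg
      have h := affine_same_sign (heyt γ hγ hg) ht₁pos.le ht₁lt1.le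
      have e : P.pair y₀ γ - 1
          = (P.pair yt γ - 1) + t₁ * ((P.pair y' γ - 1) - (P.pair yt γ - 1)) := by
        rw [hy₀a]; ring
      rw [e]; exact h
    -- roots vanishing at y₀ are parallel to α
    have hpar : ∀ β ∈ D', P.pair y₀ β = 0 →
        ∃ c : ℚ, c ≠ 0 ∧ ∀ v : Y, P.pair v β = c * P.pair v α := by
      intro β hβD' hz
      have hβR : β ∈ P.R := (Finset.mem_filter.mp hβD').1
      have hβg : G.grade β = 0 := (Finset.mem_filter.mp hβD').2.1
      have hβlt : P.pair yt β * P.pair y' β < 0 := (Finset.mem_filter.mp hβD').2.2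
      have hy'α : P.pair y' α ≠ 0 := gy'0 α hαR hαg
      have hy'β : P.pair y' β ≠ 0 := gy'0 β hβR hβg
      by_cases hLz : L (β, α) = 0
      · refine ⟨P.pair y' β / P.pair y' α, div_ne_zero hy'β hy'α, ?_⟩
        intro v
        have hv : L (β, α) v = 0 := by rw [hLz]; rfl
        rw [hLa] at hv
        simp only at hv
        rw [div_mul_eq_mul_div, eq_div_iff hy'α]
        linarith
      · exfalso
        have hqmem : (β, α) ∈ pairsSet := by
          rw [hPS]
          exact Finset.mem_filter.mpr ⟨Finset.mem_product.mpr ⟨hβR, hαR⟩, hLz⟩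
        apply hLyt (β, α) hqmem
        rw [hLa]
        simp only
        have e1 : P.pair yt β + t₁ * (P.pair y' β - P.pair yt β) = 0 := by
          rw [← hy₀a]; exact hz
        have e2 : P.pair yt α + t₁ * (P.pair y' α - P.pair yt α) = 0 := by
          rw [← hy₀a]; exact hy₀α
        have h1mt : (1 : ℚ) - t₁ ≠ 0 := by intro h; apply absurd ht₁lt1; linarith
        have key : (1 - t₁) * (P.pair y' α * P.pair yt β - P.pair y' β * P.pair yt α) = 0 := by
          linear_combination P.pair y' α * e1 - P.pair y' β * e2
        exact (mul_eq_zero.mp key).resolve_left h1mt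
    -- sign keeping before the first crossing
    have hsign_D : ∀ β ∈ D', P.pair y₀ β ≠ 0 → 0 < P.pair yt β * P.pair y₀ β := by
      intro β hβD' hne
      have hβlt : P.pair yt β * P.pair y' β < 0 := (Finset.mem_filter.mp hβD').2.2
      have hstrict : t₁ < tt β := by
        rcases lt_or_eq_of_le (hmin β hβD') with h | h
        · exact h
        · exfalso
          apply hne
          rw [hy₀a]
          exact (affine_root_iff hβlt).mpr h
      rw [hy₀a]
      exact affine_before_root hβlt ht₁pos.le hstrict
    have hkeep : ∀ β ∈ P.R, G.grade β = 0 → P.pair y₀ β ≠ 0 →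
        0 < P.pair yt β * P.pair y₀ β := by
      intro β hβ hg hne
      by_cases hmem : β ∈ D'
      · exact hsign_D β hmem hne
      · apply hsign_nonD β hβ hg
        intro hlt
        exact hmem (by rw [hD'def]; exact Finset.mem_filter.mpr ⟨hβ, hg, hlt⟩)
    -- vanishing at y₀ implies membership in D'
    have hvanD' : ∀ β ∈ P.R, G.grade β = 0 → P.pair y₀ β = 0 → β ∈ D' := by
      intro β hβ hg hz
      by_contra hmem
      have := hsign_nonD β hβ hg (fun hlt => hmem
        (by rw [hD'def]; exact Finset.mem_filter.mpr ⟨hβ, hg, hlt⟩))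
      rw [hz, mul_zero] at this
      exact lt_irrefl 0 this
    -- the sign s
    set s : ℚ := if 0 < P.pair yt α then 1 else -1 with hs
    have hsyt : 0 < s * P.pair yt α := by
      rcases aux_sign_neg hαlt with ⟨h1, h2⟩ | ⟨h1, h2⟩
      · rw [hs, if_pos h1, one_mul]; exact h1
      · rw [hs, if_neg (not_lt.mpr h1.le)]; linarith
    have hsy' : s * P.pair y' α < 0 := by
      rcases aux_sign_neg hαlt with ⟨h1, h2⟩ | ⟨h1, h2⟩
      · rw [hs, if_pos h1, one_mul]; exact h2
      · rw [hs, if_neg (not_lt.mpr h1.le)]; linarith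
    have h2α := P.pair_coroot_self α hαR
    -- the reference point for the far side
    set w : X → Y := fun β => if P.pair y₀ β = 0 then y' else yt with hw
    -- lists for the choice of ε
    set lp : List (ℚ × ℚ) := R0.toList.map fun β =>
      (P.pair yt β * P.pair y₀ β, P.pair yt β * (s * P.pair (P.coroot α) β)) with hlp
    set lm : List (ℚ × ℚ) := R0.toList.map fun β =>
      (P.pair (w β) β * P.pair y₀ β, -(P.pair (w β) β * (s * P.pair (P.coroot α) β))) with hlm
    set lp1 : List (ℚ × ℚ) := R1.toList.map fun γ =>
      ((P.pair yt γ - 1) * (P.pair y₀ γ - 1),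
        (P.pair yt γ - 1) * (s * P.pair (P.coroot α) γ)) with hlp1
    set lm1 : List (ℚ × ℚ) := R1.toList.map fun γ =>
      ((P.pair yt γ - 1) * (P.pair y₀ γ - 1),
        -((P.pair yt γ - 1) * (s * P.pair (P.coroot α) γ))) with hlm1
    have hyp1 : ∀ p ∈ lp ++ lm ++ lp1 ++ lm1, 0 < p.1 ∨ (p.1 = 0 ∧ 0 < p.2) := by
      intro p hp
      simp only [List.mem_append] at hp
      rcases hp with ((hp | hp) | hp) | hp
      · obtain ⟨β, hβl, rfl⟩ := List.mem_map.mp hp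
        rw [Finset.mem_toList, hR0, Finset.mem_filter] at hβl
        obtain ⟨hβR, hβg⟩ := hβl
        by_cases hz : P.pair y₀ β = 0
        · right
          constructor
          · simp only [hz, mul_zero]
          · obtain ⟨c, hc, hall⟩ := hpar β (hvanD' β hβR hβg hz) hz
            have e1 : P.pair yt β = c * P.pair yt α := hall yt
            have e2 : P.pair (P.coroot α) β = c * 2 := by rw [hall (P.coroot α), h2α]
            rw [e1, e2]
            have : c * P.pair yt α * (s * (c * 2)) = 2 * (c * c) * (s * P.pair yt α) := by ring
            rw [this]
            have hcc : 0 < c * c := mul_self_pos.mpr hc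
            exact mul_pos (mul_pos (by norm_num) hcc) hsyt
        · left
          exact hkeep β hβR hβg hz
      · obtain ⟨β, hβl, rfl⟩ := List.mem_map.mp hp
        rw [Finset.mem_toList, hR0, Finset.mem_filter] at hβl
        obtain ⟨hβR, hβg⟩ := hβl
        by_cases hz : P.pair y₀ β = 0
        · right
          constructor
          · simp only [hz, mul_zero]
          · obtain ⟨c, hc, hall⟩ := hpar β (hvanD' β hβR hβg hz) hz
            have hwβ : w β = y' := by rw [hw]; simp [hz]
            have e1 : P.pair (w β) β = c * P.pair y' α := by rw [hwβ]; exact hall y'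
            have e2 : P.pair (P.coroot α) β = c * 2 := by rw [hall (P.coroot α), h2α]
            rw [e1, e2]
            have : -(c * P.pair y' α * (s * (c * 2))) = 2 * (c * c) * (-(s * P.pair y' α)) := by
              ring
            rw [this]
            have hcc : 0 < c * c := mul_self_pos.mpr hc
            exact mul_pos (mul_pos (by norm_num) hcc) (neg_pos.mpr hsy')
        · left
          have hwβ : w β = yt := by rw [hw]; simp [hz]
          rw [hwβ]
          exact hkeep β hβR hβg hz
      · obtain ⟨γ, hγl, rfl⟩ := List.mem_map.mp hp
        rw [Finset.mem_toList, hR1, Finset.mem_filter] at hγl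
        left
        exact hsign_R1 γ hγl.1 hγl.2
      · obtain ⟨γ, hγl, rfl⟩ := List.mem_map.mp hp
        rw [Finset.mem_toList, hR1, Finset.mem_filter] at hγl
        left
        exact hsign_R1 γ hγl.1 hγl.2
    obtain ⟨ε, hεpos, hεall, -⟩ := exists_pos_avoiding (lp ++ lm ++ lp1 ++ lm1) [] hyp1
      (by intro p hp; exact absurd hp List.not_mem_nil)
    -- the two points on either side of the wall
    set yp : Y := y₀ + (s * ε) • P.coroot α with hyp_def
    set ym : Y := y₀ - (s * ε) • P.coroot α with hym_def
    have hypa : ∀ β : X, P.pair yp β = P.pair y₀ β + (s * ε) * P.pair (P.coroot α) β := by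
      intro β
      rw [hyp_def, map_add, map_smul]
      simp [LinearMap.add_apply, LinearMap.smul_apply, smul_eq_mul]
    have hyma : ∀ β : X, P.pair ym β = P.pair y₀ β - (s * ε) * P.pair (P.coroot α) β := by
      intro β
      rw [hym_def, map_sub, map_smul]
      simp [LinearMap.sub_apply, LinearMap.smul_apply, smul_eq_mul]
    -- consequences of the ε-conditions
    have cp0 : ∀ β ∈ P.R, G.grade β = 0 → 0 < P.pair yt β * P.pair yp β := by
      intro β hβ hg
      have hmem : (P.pair yt β * P.pair y₀ β, P.pair yt β * (s * P.pair (P.coroot α) β))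
          ∈ lp ++ lm ++ lp1 ++ lm1 := by
        simp only [List.mem_append]
        left; left; left
        rw [hlp]
        exact List.mem_map.mpr ⟨β, Finset.mem_toList.mpr
          (by rw [hR0]; exact Finset.mem_filter.mpr ⟨hβ, hg⟩), rfl⟩
      have h := hεall _ hmem
      have e : P.pair yt β * P.pair yp β
          = P.pair yt β * P.pair y₀ β + ε * (P.pair yt β * (s * P.pair (P.coroot α) β)) := by
        rw [hypa]; ring
      rw [e]; exact h
    have cm0 : ∀ β ∈ P.R, G.grade β = 0 → 0 < P.pair (w β) β * P.pair ym β := by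
      intro β hβ hg
      have hmem : (P.pair (w β) β * P.pair y₀ β,
          -(P.pair (w β) β * (s * P.pair (P.coroot α) β))) ∈ lp ++ lm ++ lp1 ++ lm1 := by
        simp only [List.mem_append]
        left; left; right
        rw [hlm]
        exact List.mem_map.mpr ⟨β, Finset.mem_toList.mpr
          (by rw [hR0]; exact Finset.mem_filter.mpr ⟨hβ, hg⟩), rfl⟩
      have h := hεall _ hmem
      have e : P.pair (w β) β * P.pair ym β
          = P.pair (w β) β * P.pair y₀ β
            + ε * (-(P.pair (w β) β * (s * P.pair (P.coroot α) β))) := by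
        rw [hyma]; ring
      rw [e]; exact h
    have cp1 : ∀ γ ∈ P.R, G.grade γ = 1 → 0 < (P.pair yt γ - 1) * (P.pair yp γ - 1) := by
      intro γ hγ hg
      have hmem : ((P.pair yt γ - 1) * (P.pair y₀ γ - 1),
          (P.pair yt γ - 1) * (s * P.pair (P.coroot α) γ)) ∈ lp ++ lm ++ lp1 ++ lm1 := by
        simp only [List.mem_append]
        left; right
        rw [hlp1]
        exact List.mem_map.mpr ⟨γ, Finset.mem_toList.mpr
          (by rw [hR1]; exact Finset.mem_filter.mpr ⟨hγ, hg⟩), rfl⟩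
      have h := hεall _ hmem
      have e : (P.pair yt γ - 1) * (P.pair yp γ - 1)
          = (P.pair yt γ - 1) * (P.pair y₀ γ - 1)
            + ε * ((P.pair yt γ - 1) * (s * P.pair (P.coroot α) γ)) := by
        rw [hypa]; ring
      rw [e]; exact h
    have cm1 : ∀ γ ∈ P.R, G.grade γ = 1 → 0 < (P.pair yt γ - 1) * (P.pair ym γ - 1) := by
      intro γ hγ hg
      have hmem : ((P.pair yt γ - 1) * (P.pair y₀ γ - 1),
          -((P.pair yt γ - 1) * (s * P.pair (P.coroot α) γ))) ∈ lp ++ lm ++ lp1 ++ lm1 := by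
        simp only [List.mem_append]
        right
        rw [hlm1]
        exact List.mem_map.mpr ⟨γ, Finset.mem_toList.mpr
          (by rw [hR1]; exact Finset.mem_filter.mpr ⟨hγ, hg⟩), rfl⟩
      have h := hεall _ hmem
      have e : (P.pair yt γ - 1) * (P.pair ym γ - 1)
          = (P.pair yt γ - 1) * (P.pair y₀ γ - 1)
            + ε * (-((P.pair yt γ - 1) * (s * P.pair (P.coroot α) γ))) := by
        rw [hyma]; ring
      rw [e]; exact h
    -- the reflection sends yp to ym
    obtain ⟨u, huW, huY, -⟩ := refl_exists m P G hαR hαg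
    have hrefl : u.1 yp = ym := by
      rw [huY yp]
      have hpαval : P.pair yp α = (s * ε) * 2 := by
        rw [hypa, hy₀α, h2α, zero_add]
      rw [hpαval, hyp_def, hym_def]
      module
    -- chain of equalities
    have step1 : FS2 m P G Wfin y y₂ = FS2 m P G Wfin yt y₂ := FS2_cell m P G Wfin cell0 cell1 y₂
    have step2 : FS2 m P G Wfin yt y₂ = FS2 m P G Wfin yp y₂ := FS2_cell m P G Wfin cp0 cp1 y₂
    have step3 : FS2 m P G Wfin yp y₂ = FS2 m P G Wfin ym y₂ := by
      rw [← hrefl]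
      exact (FS2_winv m P G Wfin hWfin hstab huW yp y₂).symm
    -- genericity of ym
    have gm0 : ∀ β ∈ P.R, G.grade β = 0 → P.pair ym β ≠ 0 := by
      intro β hβ hg h
      have := cm0 β hβ hg
      rw [h, mul_zero] at this
      exact lt_irrefl 0 this
    have gm1 : ∀ γ ∈ P.R, G.grade γ = 1 → P.pair ym γ ≠ 1 := by
      intro γ hγ hg h
      have := cm1 γ hγ hg
      rw [h, sub_self, mul_zero] at this
      exact lt_irrefl 0 this
    have hem : ∀ γ ∈ P.R, G.grade γ = 1 →
        0 < (P.pair ym γ - 1) * (P.pair y' γ - 1) :=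
      fun γ hγ hg => mulpos_trans (cm1 γ hγ hg) (heyt γ hγ hg)
    -- the separation count went down
    have hsub : (P.R.filter fun β => G.grade β = 0 ∧ P.pair ym β * P.pair y' β < 0)
        ⊆ D'.erase α := by
      intro β hβ
      obtain ⟨hβR, hβg, hβlt⟩ := Finset.mem_filter.mp hβ
      by_cases hz : P.pair y₀ β = 0
      · exfalso
        have hwβ : w β = y' := by rw [hw]; simp [hz]
        have hthis := cm0 β hβR hβg
        rw [hwβ, mul_comm] at hthis
        linarith
      · have hwβ : w β = yt := by rw [hw]; simp [hz]
        have hpos : 0 < P.pair yt β * P.pair ym β := by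
          have := cm0 β hβR hβg
          rw [hwβ] at this
          exact this
        have hβne : β ≠ α := by
          intro h
          rw [h] at hz
          exact hz hy₀α
        apply Finset.mem_erase.mpr
        refine ⟨hβne, ?_⟩
        rw [hD'def]
        apply Finset.mem_filter.mpr
        refine ⟨hβR, hβg, ?_⟩
        have hcomm : 0 < P.pair ym β * P.pair yt β := by rw [mul_comm]; exact hpos
        exact (sign_mul_iff hcomm).mp hβlt
    have hcard : (P.R.filter fun β => G.grade β = 0 ∧ P.pair ym β * P.pair y' β < 0).card ≤ n := by
      calc (P.R.filter fun β => G.grade β = 0 ∧ P.pair ym β * P.pair y' β < 0).card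
          ≤ (D'.erase α).card := Finset.card_le_card hsub
        _ = D'.card - 1 := Finset.card_erase_of_mem hαD'
        _ ≤ (n + 1) - 1 := Nat.sub_le_sub_right hD'card 1
        _ = n := Nat.succ_sub_one n
    have step4 : FS2 m P G Wfin ym y₂ = FS2 m P G Wfin y' y₂ :=
      ih ym y' gm0 gm1 gy'0 gy'1 hem hcard
    rw [step1, step2, step3, step4]

end FS

end St16Aux


/-- cf. A.1(a) of the paper: the sum `Σ_{w∈W₀} v^{τ(y₁, w(y₂))}`
only depends on the coarse equivalence classes (for `≈`) of `y₁` and `y₂`. -/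
theorem statement16 (m : ℕ) (hm : 0 < m) (P : RootSystemQ Y X) (G : ZModGrading m P)
    (hstab : ∀ p ∈ W0P m P G, ∀ α ∈ P.R, p.2 α ∈ P.R ∧ G.grade (p.2 α) = G.grade α)
    (y₁ y₁' y₂ y₂' : Y)
    (h₁ : memYprime m P G y₁) (h₁' : memYprime m P G y₁')
    (h₂ : memYprime m P G y₂) (h₂' : memYprime m P G y₂')
    (ha : ∀ α ∈ P.R, G.grade α = 1 → 0 < (P.pair y₁ α - 1) * (P.pair y₁' α - 1))
    (hb : ∀ α ∈ P.R, G.grade α = 1 → 0 < (P.pair y₂ α - 1) * (P.pair y₂' α - 1)) :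
    (∑ᶠ p ∈ W0P m P G, (LaurentPolynomial.T (tauP m P G y₁ (p.1 y₂)) : LaurentPolynomial ℤ)) =
      ∑ᶠ p ∈ W0P m P G, (LaurentPolynomial.T (tauP m P G y₁' (p.1 y₂')) : LaurentPolynomial ℤ) := by
  
  classical
  have g0 : ∀ y : Y, memYprime m P G y → ∀ β ∈ P.R, G.grade β = 0 → P.pair y β ≠ 0 := by
    intro y hy β hβ hg
    have := hy β hβ 0 (by rw [hg]; simp)
    simpa using this
  have g1 : ∀ y : Y, memYprime m P G y → ∀ γ ∈ P.R, G.grade γ = 1 → P.pair y γ ≠ 1 := by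
    intro y hy γ hγ hg
    have := hy γ hγ 1 (by rw [hg]; simp)
    simpa using this
  by_cases hfin : (W0P m P G : Set ((Y ≃ₗ[ℚ] Y) × (X ≃ₗ[ℚ] X))).Finite
  · have hWfin : ∀ p, p ∈ hfin.toFinset ↔ p ∈ W0P m P G := fun p => hfin.mem_toFinset
    have key : St16Aux.FS2 m P G hfin.toFinset y₁ y₂ = St16Aux.FS2 m P G hfin.toFinset y₁' y₂' := by
      calc St16Aux.FS2 m P G hfin.toFinset y₁ y₂
          = St16Aux.FS2 m P G hfin.toFinset y₁' y₂ :=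
            St16Aux.FS2_main m P G hfin.toFinset hWfin hstab y₂
              ((P.R.filter fun β => G.grade β = 0 ∧ P.pair y₁ β * P.pair y₁' β < 0).card)
              y₁ y₁' (g0 y₁ h₁) (g1 y₁ h₁) (g0 y₁' h₁') (g1 y₁' h₁') ha le_rfl
        _ = St16Aux.FS2 m P G hfin.toFinset y₂ y₁' :=
            St16Aux.FS2_swap m P G hfin.toFinset hWfin hstab y₁' y₂
        _ = St16Aux.FS2 m P G hfin.toFinset y₂' y₁' :=
            St16Aux.FS2_main m P G hfin.toFinset hWfin hstab y₁'
              ((P.R.filter fun β => G.grade β = 0 ∧ P.pair y₂ β * P.pair y₂' β < 0).card)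
              y₂ y₂' (g0 y₂ h₂) (g1 y₂ h₂) (g0 y₂' h₂') (g1 y₂' h₂') hb le_rfl
        _ = St16Aux.FS2 m P G hfin.toFinset y₁' y₂' :=
            St16Aux.FS2_swap m P G hfin.toFinset hWfin hstab y₂' y₁'
    have conv1 : (∑ᶠ p ∈ W0P m P G,
        (LaurentPolynomial.T (tauP m P G y₁ (p.1 y₂)) : LaurentPolynomial ℤ))
        = St16Aux.FS2 m P G hfin.toFinset y₁ y₂ := by
      show (∑ᶠ p ∈ (W0P m P G : Set ((Y ≃ₗ[ℚ] Y) × (X ≃ₗ[ℚ] X))),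
        (LaurentPolynomial.T (tauP m P G y₁ (p.1 y₂)) : LaurentPolynomial ℤ)) = _
      rw [finsum_mem_eq_finite_toFinset_sum _ hfin]
      rfl
    have conv2 : (∑ᶠ p ∈ W0P m P G,
        (LaurentPolynomial.T (tauP m P G y₁' (p.1 y₂')) : LaurentPolynomial ℤ))
        = St16Aux.FS2 m P G hfin.toFinset y₁' y₂' := by
      show (∑ᶠ p ∈ (W0P m P G : Set ((Y ≃ₗ[ℚ] Y) × (X ≃ₗ[ℚ] X))),
        (LaurentPolynomial.T (tauP m P G y₁' (p.1 y₂')) : LaurentPolynomial ℤ)) = _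
      rw [finsum_mem_eq_finite_toFinset_sum _ hfin]
      rfl
    rw [conv1, conv2, key]
  · have hTne : ∀ (k : ℤ), (LaurentPolynomial.T k : LaurentPolynomial ℤ) ≠ 0 := by
      intro k hz
      have h1 : (LaurentPolynomial.T (k + -k) : LaurentPolynomial ℤ)
          = LaurentPolynomial.T k * LaurentPolynomial.T (-k) := LaurentPolynomial.T_add k (-k)
      rw [add_neg_cancel, LaurentPolynomial.T_zero, hz, zero_mul] at h1
      exact one_ne_zero h1
    have hinf : (W0P m P G : Set ((Y ≃ₗ[ℚ] Y) × (X ≃ₗ[ℚ] X))).Infinite := hfin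
    have z1 : (∑ᶠ p ∈ W0P m P G,
        (LaurentPolynomial.T (tauP m P G y₁ (p.1 y₂)) : LaurentPolynomial ℤ)) = 0 := by
      apply finsum_mem_eq_zero_of_infinite
      have : ((W0P m P G : Set ((Y ≃ₗ[ℚ] Y) × (X ≃ₗ[ℚ] X))) ∩
          Function.support (fun p : (Y ≃ₗ[ℚ] Y) × (X ≃ₗ[ℚ] X) =>
            (LaurentPolynomial.T (tauP m P G y₁ (p.1 y₂)) : LaurentPolynomial ℤ)))
          = (W0P m P G : Set ((Y ≃ₗ[ℚ] Y) × (X ≃ₗ[ℚ] X))) := by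
        apply Set.inter_eq_self_of_subset_left
        intro p _
        exact hTne _
      rw [this]
      exact hinf
    have z2 : (∑ᶠ p ∈ W0P m P G,
        (LaurentPolynomial.T (tauP m P G y₁' (p.1 y₂')) : LaurentPolynomial ℤ)) = 0 := by
      apply finsum_mem_eq_zero_of_infinite
      have : ((W0P m P G : Set ((Y ≃ₗ[ℚ] Y) × (X ≃ₗ[ℚ] X))) ∩
          Function.support (fun p : (Y ≃ₗ[ℚ] Y) × (X ≃ₗ[ℚ] X) =>
            (LaurentPolynomial.T (tauP m P G y₁' (p.1 y₂')) : LaurentPolynomial ℤ)))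
          = (W0P m P G : Set ((Y ≃ₗ[ℚ] Y) × (X ≃ₗ[ℚ] X))) := by
        apply Set.inter_eq_self_of_subset_left
        intro p _
        exact hTne _
      rw [this]
      exact hinf
    rw [z1, z2]
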